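/- In the secure-delivery setup, suppose the family (w_ρ)_{ρ∈S} of vectors in ℂⁿ is R0-feasible. Then the family of matrices W_ρ := w_ρ w_ρᴴ is R1-feasible (in particular each W_ρ is PSD with rank(W_ρ) ≤ 1), and Σ_{ρ∈S} tr(W_ρ) = Σ_{ρ∈S} ‖w_ρ‖². -/

import Mathlib

open Matrix ComplexOrder Finset

/-- Outer product `w wᴴ` of a complex column vector with its conjugate transpose. -/
def outerProd {n : ℕ} (w : Fin n → ℂ) : Matrix (Fin n) (Fin n) ℂ :=
  Matrix.vecMulVec w (star w)


lemma outerProd_posSemidef {n : ℕ} (v : Fin n → ℂ) : (outerProd v).PosSemidef := by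
  have h := Matrix.posSemidef_conjTranspose_mul_self (Matrix.replicateRow (Fin 1) (star v))
  have he : outerProd v = (Matrix.replicateRow (Fin 1) (star v))ᴴ * Matrix.replicateRow (Fin 1) (star v) := by
    rw [outerProd, Matrix.vecMulVec_eq (Fin 1)]
    congr 1
    ext i j
    simp [Matrix.conjTranspose_apply, Matrix.replicateRow, Matrix.replicateCol]
  rw [he]; exact h

lemma trace_mul_outerProd {n : ℕ} (A : Matrix (Fin n) (Fin n) ℂ) (v : Fin n → ℂ) :
    (A * outerProd v).trace = star v ⬝ᵥ (A *ᵥ v) := by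
  simp only [Matrix.trace, Matrix.diag, Matrix.mul_apply, outerProd, Matrix.vecMulVec_apply,
    dotProduct, Matrix.mulVec, Pi.star_apply, Finset.mul_sum]
  refine Finset.sum_congr rfl fun i _ => Finset.sum_congr rfl fun j _ => by ring

lemma dot_outer_mulVec {n : ℕ} (u h : Fin n → ℂ) :
    star h ⬝ᵥ (outerProd u *ᵥ h) = (star h ⬝ᵥ u) * star (star h ⬝ᵥ u) := by
  simp only [outerProd, dotProduct, Matrix.mulVec, Matrix.vecMulVec_apply, Pi.star_apply,
    star_sum, star_mul', star_star, Finset.mul_sum, Finset.sum_mul]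
  rw [Finset.sum_comm]
  refine Finset.sum_congr rfl fun i _ => Finset.sum_congr rfl fun j _ => by ring

lemma trace_outer_mul_outer {n : ℕ} (u h : Fin n → ℂ) :
    ((outerProd u * outerProd h).trace).re = ‖star h ⬝ᵥ u‖ ^ 2 := by
  rw [trace_mul_outerProd, dot_outer_mulVec]
  rw [show (star h ⬝ᵥ u) * star (star h ⬝ᵥ u) = (star h ⬝ᵥ u) * (starRingEnd ℂ) (star h ⬝ᵥ u) from rfl,
    Complex.mul_conj]
  rw [Complex.ofReal_re, Complex.normSq_eq_norm_sq]

lemma dot_star_self_eq {k : ℕ} (x : Fin k → ℂ) :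
    star x ⬝ᵥ x = ((∑ i, ‖x i‖ ^ 2 : ℝ) : ℂ) := by
  rw [Complex.ofReal_sum]
  refine Finset.sum_congr rfl fun i _ => ?_
  rw [Pi.star_apply, show star (x i) = (starRingEnd ℂ) (x i) from rfl, mul_comm,
    Complex.mul_conj, Complex.normSq_eq_norm_sq, Complex.ofReal_pow]

lemma mul_star_self_eq (c : ℂ) : c * star c = ((‖c‖ ^ 2 : ℝ) : ℂ) := by
  rw [show star c = (starRingEnd ℂ) c from rfl, Complex.mul_conj, Complex.normSq_eq_norm_sq,
    Complex.ofReal_pow]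

lemma cauchy_dot {k : ℕ} (u x : Fin k → ℂ) :
    ‖star x ⬝ᵥ u‖ ^ 2 ≤ (∑ i, ‖u i‖ ^ 2) * (∑ i, ‖x i‖ ^ 2) := by
  let U : EuclideanSpace ℂ (Fin k) := (WithLp.equiv 2 _).symm u
  let X : EuclideanSpace ℂ (Fin k) := (WithLp.equiv 2 _).symm x
  have hinner : (inner ℂ X U : ℂ) = star x ⬝ᵥ u := by
    simp [PiLp.inner_apply, dotProduct, X, U, mul_comm, Complex.star_def]
  have h := norm_inner_le_norm (𝕜 := ℂ) X U
  have h2 : ‖(inner ℂ X U : ℂ)‖ ^ 2 ≤ (‖X‖ * ‖U‖) ^ 2 := by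
    have := norm_nonneg (inner ℂ X U : ℂ)
    nlinarith [norm_nonneg X, norm_nonneg U]
  have hXn : ‖X‖ ^ 2 = ∑ i, ‖x i‖ ^ 2 := by
    rw [EuclideanSpace.norm_eq, Real.sq_sqrt (by positivity)]
    rfl
  have hUn : ‖U‖ ^ 2 = ∑ i, ‖u i‖ ^ 2 := by
    rw [EuclideanSpace.norm_eq, Real.sq_sqrt (by positivity)]
    rfl
  calc ‖star x ⬝ᵥ u‖ ^ 2 = ‖(inner ℂ X U : ℂ)‖ ^ 2 := by rw [hinner]
    _ ≤ (‖X‖ * ‖U‖) ^ 2 := h2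
    _ = (∑ i, ‖u i‖ ^ 2) * (∑ i, ‖x i‖ ^ 2) := by rw [mul_pow, hXn, hUn]; ring

lemma smul_one_sub_outer_posSemidef {k : ℕ} (a : ℝ) (u : Fin k → ℂ)
    (ha : ∑ i, ‖u i‖ ^ 2 ≤ a) :
    (((a : ℝ) : ℂ) • (1 : Matrix (Fin k) (Fin k) ℂ) - outerProd u).PosSemidef := by
  refine Matrix.PosSemidef.of_dotProduct_mulVec_nonneg ?_ ?_
  · have h1 : (((a : ℝ) : ℂ) • (1 : Matrix (Fin k) (Fin k) ℂ)).IsHermitian := by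
      simp [Matrix.IsHermitian, Matrix.conjTranspose_smul, Complex.star_def,
        Complex.conj_ofReal]
    exact h1.sub (outerProd_posSemidef u).1
  · intro x
    have hmv : (((a : ℝ) : ℂ) • (1 : Matrix (Fin k) (Fin k) ℂ) - outerProd u) *ᵥ x
        = ((a : ℝ) : ℂ) • x - outerProd u *ᵥ x := by
      rw [Matrix.sub_mulVec, Matrix.smul_mulVec, Matrix.one_mulVec]
    rw [hmv, dotProduct_sub, dotProduct_smul, dot_outer_mulVec, dot_star_self_eq,
      mul_star_self_eq]
    rw [smul_eq_mul, ← Complex.ofReal_mul, ← Complex.ofReal_sub, Complex.zero_le_real]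
    have hcs := cauchy_dot u x
    have hx : (0 : ℝ) ≤ ∑ i, ‖x i‖ ^ 2 := by positivity
    nlinarith

lemma GH_outer_G {k e : ℕ} (G : Matrix (Fin k) (Fin e) ℂ) (v : Fin k → ℂ) :
    Gᴴ * outerProd v * G = outerProd (Gᴴ *ᵥ v) := by
  ext i j
  simp only [Matrix.mul_apply, outerProd, Matrix.vecMulVec_apply, Matrix.mulVec,
    Matrix.conjTranspose_apply, dotProduct, Pi.star_apply, star_sum, star_mul', star_star,
    Finset.sum_mul, Finset.mul_sum]
  refine Finset.sum_congr rfl fun l _ => Finset.sum_congr rfl fun m _ => by ring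

lemma det_one_add_smul_outer {k : ℕ} (c : ℂ) (v : Fin k → ℂ) :
    ((1 : Matrix (Fin k) (Fin k) ℂ) + c • outerProd v).det = 1 + c * (star v ⬝ᵥ v) := by
  rw [outerProd, Matrix.vecMulVec_eq (Fin 1)]
  have : c • (Matrix.replicateCol (Fin 1) v * Matrix.replicateRow (Fin 1) (star v))
      = Matrix.replicateCol (Fin 1) (c • v) * Matrix.replicateRow (Fin 1) (star v) := by
    rw [Matrix.replicateCol_smul, Matrix.smul_mul]
  erw [this, Matrix.det_one_add_replicateCol_mul_replicateRow]
  rw [dotProduct_smul, smul_eq_mul]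

lemma trace_outerProd_re {k : ℕ} (v : Fin k → ℂ) :
    ((outerProd v).trace).re = ∑ i, ‖v i‖ ^ 2 := by
  have : (outerProd v).trace = ∑ i, v i * star (v i) := by
    simp [Matrix.trace, Matrix.diag, outerProd, Matrix.vecMulVec_apply]
  rw [this]
  rw [Complex.re_sum]
  refine Finset.sum_congr rfl fun i _ => ?_
  rw [mul_star_self_eq, Complex.ofReal_re]

lemma rank_outerProd_le {k : ℕ} (v : Fin k → ℂ) : (outerProd v).rank ≤ 1 := by
  rw [outerProd, Matrix.vecMulVec_eq (Fin 1)]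
  exact (Matrix.rank_mul_le_left _ _).trans
    ((Matrix.rank_le_card_width _).trans (by simp))

/-- R0-feasibility of a family of beamforming vectors `(w_ρ)_{ρ ∈ S}`:
per-BS big-M power constraints C4, per-BS power constraints C5, the QoS
constraints C6 in affine form, and the secrecy constraints C7. -/
def R0Feasible {n Ne : ℕ} {M S : Type*} [Fintype M] [Fintype S] [DecidableEq S]
    (Λ : M → Matrix (Fin n) (Fin n) ℂ) (P : M → ℝ) (q : M → S → ℝ)
    (hch : S → Fin n → ℂ) (G : Matrix (Fin n) (Fin Ne) ℂ)
    (σ2 σe2 : ℝ) (κreq κtol : S → ℝ) (w : S → Fin n → ℂ) : Prop :=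
  (∀ m ρ, (star (w ρ) ⬝ᵥ (Λ m) *ᵥ (w ρ)).re ≤ q m ρ * P m) ∧
  (∀ m, ∑ ρ : S, (star (w ρ) ⬝ᵥ (Λ m) *ᵥ (w ρ)).re ≤ P m) ∧
  (∀ ρ : S, σ2 + ∑ ρ' ∈ Finset.univ.erase ρ, ‖star (hch ρ) ⬝ᵥ w ρ'‖ ^ 2
      ≤ (κreq ρ)⁻¹ * ‖star (hch ρ) ⬝ᵥ w ρ‖ ^ 2) ∧
  (∀ ρ : S, ((1 : Matrix (Fin Ne) (Fin Ne) ℂ)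
      + ((σe2⁻¹ : ℝ) : ℂ) • (Gᴴ * outerProd (w ρ) * G)).det
        ≤ ((1 + κtol ρ : ℝ) : ℂ))

/-- R1-feasibility of a family of PSD matrices `(W_ρ)_{ρ ∈ S}`: the SDP
relaxation of R0 with constraints C4–C7 rewritten linearly in `W_ρ`. -/
def R1Feasible {n Ne : ℕ} {M S : Type*} [Fintype M] [Fintype S] [DecidableEq S]
    (Λ : M → Matrix (Fin n) (Fin n) ℂ) (P : M → ℝ) (q : M → S → ℝ)
    (hch : S → Fin n → ℂ) (G : Matrix (Fin n) (Fin Ne) ℂ)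
    (σ2 σe2 : ℝ) (κreq κtol : S → ℝ) (W : S → Matrix (Fin n) (Fin n) ℂ) : Prop :=
  (∀ ρ : S, (W ρ).PosSemidef) ∧
  (∀ m ρ, ((Λ m * W ρ).trace).re ≤ q m ρ * P m) ∧
  (∀ m, ∑ ρ : S, ((Λ m * W ρ).trace).re ≤ P m) ∧
  (∀ ρ : S, σ2 + ∑ ρ' ∈ Finset.univ.erase ρ, ((W ρ' * outerProd (hch ρ)).trace).re
      ≤ (κreq ρ)⁻¹ * ((W ρ * outerProd (hch ρ)).trace).re) ∧
  (∀ ρ : S, (((σe2 * κtol ρ : ℝ) : ℂ) • (1 : Matrix (Fin Ne) (Fin Ne) ℂ)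
      - Gᴴ * W ρ * G).PosSemidef)

/-- If `(w_ρ)_{ρ∈S}` is R0-feasible, then the rank-one family
`W_ρ = w_ρ w_ρᴴ` is R1-feasible (each `W_ρ` PSD of rank ≤ 1), and
`Σ_ρ tr W_ρ = Σ_ρ ‖w_ρ‖²`. -/
theorem r1Feasible_of_r0Feasible {M S : Type*} [Fintype M] [Fintype S] [DecidableEq S]
    (Nt Ne n : ℕ) (hNt : 0 < Nt) (hNe : 0 < Ne) (hn : n = Fintype.card M * Nt)
    (Λ : M → Matrix (Fin n) (Fin n) ℂ) (P : M → ℝ) (q : M → S → ℝ)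
    (hch : S → Fin n → ℂ) (G : Matrix (Fin n) (Fin Ne) ℂ)
    (σ2 σe2 : ℝ) (κreq κtol : S → ℝ)
    (hΛdiag : ∀ m, ∀ i j : Fin n, i ≠ j → Λ m i j = 0)
    (hΛ01 : ∀ m, ∀ i : Fin n, Λ m i i = 0 ∨ Λ m i i = 1)
    (hΛsum : ∑ m : M, Λ m = 1)
    (hP : ∀ m, 0 < P m) (hq : ∀ m ρ, q m ρ = 0 ∨ q m ρ = 1)
    (hσ2 : 0 < σ2) (hσe2 : 0 < σe2)
    (hκreq : ∀ ρ, 0 < κreq ρ) (hκtol : ∀ ρ, 0 ≤ κtol ρ)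
    (w : S → Fin n → ℂ)
    (hw : R0Feasible Λ P q hch G σ2 σe2 κreq κtol w) :
    R1Feasible Λ P q hch G σ2 σe2 κreq κtol (fun ρ => outerProd (w ρ)) ∧
      (∀ ρ : S, (outerProd (w ρ)).rank ≤ 1) ∧
      ∑ ρ : S, ((outerProd (w ρ)).trace).re = ∑ ρ : S, ∑ i : Fin n, ‖w ρ i‖ ^ 2 := by
  obtain ⟨h4, h5, h6, h7⟩ := hw
  refine ⟨⟨fun ρ => outerProd_posSemidef _, ?_, ?_, ?_, ?_⟩,
    fun ρ => rank_outerProd_le _, ?_⟩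
  · intro m ρ
    simpa only [trace_mul_outerProd] using h4 m ρ
  · intro m
    simpa only [trace_mul_outerProd] using h5 m
  · intro ρ
    simpa only [trace_outer_mul_outer] using h6 ρ
  · intro ρ
    have hdet := h7 ρ
    rw [GH_outer_G, det_one_add_smul_outer, dot_star_self_eq] at hdet
    set T := ∑ i, ‖(Gᴴ *ᵥ w ρ) i‖ ^ 2 with hT
    have hcast : (1 : ℂ) + ((σe2⁻¹ : ℝ) : ℂ) * ((T : ℝ) : ℂ) = ((1 + σe2⁻¹ * T : ℝ) : ℂ) := by
      push_cast; ring
    rw [hcast, Complex.real_le_real] at hdet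
    have h1 : σe2⁻¹ * T ≤ κtol ρ := by linarith
    have h2 := mul_le_mul_of_nonneg_left h1 hσe2.le
    rw [← mul_assoc, mul_inv_cancel₀ hσe2.ne', one_mul] at h2
    have := smul_one_sub_outer_posSemidef (σe2 * κtol ρ) (Gᴴ *ᵥ w ρ) h2
    simpa only [GH_outer_G] using this
  · exact Finset.sum_congr rfl fun ρ _ => trace_outerProd_re _
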